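/- arXiv:1601.00305 — 2 statements merged into one kernel-verified Lean document; each statement's English description precedes it below -/
import Mathlib

section
/- Suppose (a|b) is a Frobenius seaweed datum for sp_{2n} (i.e., T_n(a|b)=0) with Σb_j = n and Σa_i = n−k, so the meander graph Γ^C_n(a|b) has exactly k central arcs (all above the horizontal line). Then Γ^C_n(a|b) has exactly k connected components, each a σ-stable segment containing exactly one central arc, and the total number of arcs of Γ^C_n(a|b) is 2n−k. -/
/-- The arc of a block starting at offset `o` of size `m`: the `k`-th nested arc
joins vertices `o+k` and `o+(m-1-k)` (0-based), for `2k+1 < m`. -/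
def inBlockArc (o m i j : ℕ) : Prop :=
  ∃ k : ℕ, 2 * k + 1 < m ∧ i = o + k ∧ j = o + (m - 1 - k)

/-- Arcs determined by a composition, drawn block by block starting at offset `o`. -/
def arcs : List ℕ → ℕ → ℕ → ℕ → Prop
  | [], _, _, _ => False
  | m :: rest, o, i, j => inBlockArc o m i j ∨ arcs rest (o + m) i j

/-- The type-A meander graph of the pair of compositions `(a | b)` on `n` vertices
(0-based): arcs of `a` above the line, arcs of `b` below. -/
def meanderA (n : ℕ) (a b : List ℕ) : SimpleGraph (Fin n) where
  Adj i j := i ≠ j ∧ (arcs a 0 i.val j.val ∨ arcs a 0 j.val i.val ∨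
      arcs b 0 i.val j.val ∨ arcs b 0 j.val i.val)
  symm := by
    constructor
    intro i j h
    exact ⟨Ne.symm h.1, by tauto⟩
  loopless := by
    constructor
    intro i h
    exact h.1 rfl

/-- The symmetric composition `(a₁,…,a_s, 2d, a_s,…,a₁)` of `2n`, where
`d = n - Σ aᵢ` (a zero middle part is omitted). -/
def tildeComp (n : ℕ) (a : List ℕ) : List ℕ :=
  (a ++ [2 * (n - a.sum)] ++ a.reverse).filter (fun x => x != 0)

/-- The type-C meander graph `Γ^C_n(a|b)` on `2n` vertices. -/
def meanderC (n : ℕ) (a b : List ℕ) : SimpleGraph (Fin (2 * n)) :=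
  meanderA (2 * n) (tildeComp n a) (tildeComp n b)

/-- The reflection `σ` sending vertex `i` to `2n + 1 - i` (0-based: `i ↦ 2n - 1 - i`). -/
def sigmaRefl (n : ℕ) : Fin (2 * n) → Fin (2 * n) :=
  fun i => ⟨2 * n - 1 - i.val, by have := i.isLt; omega⟩

/-- A connected component is a cycle if every vertex in it has degree 2. -/
def IsCycleComp {V : Type*} (G : SimpleGraph V) (c : G.ConnectedComponent) : Prop :=
  ∀ v, G.connectedComponentMk v = c → (G.neighborSet v).ncard = 2

/-- A connected component is a segment if it is not a cycle. -/
def IsSegmentComp {V : Type*} (G : SimpleGraph V) (c : G.ConnectedComponent) : Prop :=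
  ¬ IsCycleComp G c

/-- The number of cycles of a graph. -/
noncomputable def numCycles {V : Type*} (G : SimpleGraph V) : ℕ :=
  {c : G.ConnectedComponent | IsCycleComp G c}.ncard

/-- The number of segments of a graph. -/
noncomputable def numSegments {V : Type*} (G : SimpleGraph V) : ℕ :=
  {c : G.ConnectedComponent | IsSegmentComp G c}.ncard

/-- A component of a type-C meander graph is `σ`-stable if `σ` maps it to itself. -/
def SigmaStable (n : ℕ) (G : SimpleGraph (Fin (2 * n))) (c : G.ConnectedComponent) : Prop :=
  ∀ v, G.connectedComponentMk v = c → G.connectedComponentMk (sigmaRefl n v) = c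

/-- The number of non-`σ`-stable segments of `Γ^C_n(a|b)`. -/
noncomputable def numNonStableSegments (n : ℕ) (a b : List ℕ) : ℕ :=
  {c : (meanderC n a b).ConnectedComponent |
    IsSegmentComp (meanderC n a b) c ∧ ¬ SigmaStable n (meanderC n a b) c}.ncard

/-- The topological index `T_n(a|b)` of `Γ^C_n(a|b)`:
(number of cycles) + ½·(number of non-`σ`-stable segments). -/
noncomputable def topIndex (n : ℕ) (a b : List ℕ) : ℚ :=
  (numCycles (meanderC n a b) : ℚ) + (numNonStableSegments n a b : ℚ) / 2

/-- A composition: all parts are positive. -/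
def IsComposition (a : List ℕ) : Prop := ∀ x ∈ a, 0 < x

def touch (c : List ℕ) (o i j : ℕ) : Prop := arcs c o i j ∨ arcs c o j i

lemma arcs_append (c1 c2 : List ℕ) (o i j : ℕ) :
    arcs (c1 ++ c2) o i j ↔ arcs c1 o i j ∨ arcs c2 (o + c1.sum) i j := by
  induction c1 generalizing o with
  | nil => simp [arcs]
  | cons m rest ih =>
      show inBlockArc o m i j ∨ arcs (rest ++ c2) (o + m) i j ↔ _
      rw [ih]
      show _ ↔ (inBlockArc o m i j ∨ arcs rest (o + m) i j) ∨ _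
      rw [List.sum_cons, or_assoc, show o + (m + rest.sum) = o + m + rest.sum by omega]

lemma inBlockArc_bounds {o m i j : ℕ} (h : inBlockArc o m i j) :
    o ≤ i ∧ i < j ∧ j < o + m := by
  obtain ⟨k, hk, hi, hj⟩ := h
  omega

lemma arcs_bounds {c : List ℕ} {o i j : ℕ} (h : arcs c o i j) :
    o ≤ i ∧ i < j ∧ j < o + c.sum := by
  induction c generalizing o with
  | nil => exact h.elim
  | cons m rest ih =>
      rcases h with h | h
      · have := inBlockArc_bounds h; simp only [List.sum_cons]; omega
      · have := ih h; simp only [List.sum_cons]; omega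

lemma touch_functional {c : List ℕ} {o i j j' : ℕ}
    (h : touch c o i j) (h' : touch c o i j') : j = j' := by
  induction c generalizing o with
  | nil => exact h.elim (fun h => h.elim) (fun h => h.elim)
  | cons m rest ih =>
      rcases h with (h1 | h1) <;> rcases h1 with h1 | h1 <;>
        rcases h' with (h2 | h2) <;> rcases h2 with h2 | h2
      all_goals first
        | (obtain ⟨k, hk, hk1, hk2⟩ := h1; obtain ⟨l, hl, hl1, hl2⟩ := h2; omega)
        | (exact ih (Or.inl h1) (Or.inl h2))
        | (exact ih (Or.inl h1) (Or.inr h2))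
        | (exact ih (Or.inr h1) (Or.inl h2))
        | (exact ih (Or.inr h1) (Or.inr h2))
        | (obtain ⟨k, hk, hk1, hk2⟩ := h1; have := arcs_bounds h2; omega)
        | (obtain ⟨k, hk, hk1, hk2⟩ := h2; have := arcs_bounds h1; omega)

lemma arcs_reverse {c : List ℕ} {o i j S : ℕ} (h : arcs c o i j) (hS : o + c.sum ≤ S) :
    arcs c.reverse (S - o - c.sum) (S - 1 - j) (S - 1 - i) := by
  induction c generalizing o with
  | nil => exact h.elim
  | cons m rest ih =>
      have hb := arcs_bounds h
      simp only [List.sum_cons] at hS hb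
      rw [List.reverse_cons, arcs_append]
      rcases h with ⟨k, hk, hi, hj⟩ | h
      · refine Or.inr (Or.inl ⟨k, hk, ?_, ?_⟩) <;> simp only [List.sum_reverse, List.sum_cons] <;> omega
      · left
        have := ih h (by omega)
        rw [show S - (o + m) - rest.sum = S - o - (m :: rest).sum by simp [List.sum_cons]; omega] at this
        exact this

section TildeFacts

variable {n k : ℕ} {a b : List ℕ}

lemma comp_filter (ha : IsComposition a) : a.filter (fun x => x != 0) = a := by
  rw [List.filter_eq_self]
  intro x hx
  simpa using (ha x hx).ne'

lemma tildeA_eq (ha : IsComposition a) (hsa : a.sum = n - k) (hk1 : 1 ≤ k) (hkn : k ≤ n) :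
    tildeComp n a = a ++ [2 * k] ++ a.reverse := by
  unfold tildeComp
  rw [hsa, show n - (n - k) = k from by omega]
  rw [List.filter_append, List.filter_append, comp_filter ha,
    comp_filter (fun x hx => ha x (List.mem_reverse.mp hx))]
  have h2k : (2 * k != 0) = true := by simpa using (by omega : 2 * k ≠ 0)
  simp [List.filter, h2k]

lemma tildeB_eq (hb : IsComposition b) (hsb : b.sum = n) :
    tildeComp n b = b ++ b.reverse := by
  unfold tildeComp
  rw [hsb, Nat.sub_self, Nat.mul_zero]
  rw [List.filter_append, List.filter_append, comp_filter hb,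
    comp_filter (fun x hx => hb x (List.mem_reverse.mp hx))]
  simp [List.filter]

lemma tildeA_sum (ha : IsComposition a) (hsa : a.sum = n - k) (hk1 : 1 ≤ k) (hkn : k ≤ n) :
    (tildeComp n a).sum = 2 * n := by
  rw [tildeA_eq ha hsa hk1 hkn]
  simp [List.sum_append, List.sum_reverse, hsa]
  omega

lemma tildeB_sum (hb : IsComposition b) (hsb : b.sum = n) :
    (tildeComp n b).sum = 2 * n := by
  rw [tildeB_eq hb hsb]
  simp [List.sum_append, List.sum_reverse, hsb]
  omega

lemma tildeA_rev (ha : IsComposition a) (hsa : a.sum = n - k) (hk1 : 1 ≤ k) (hkn : k ≤ n) :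
    (tildeComp n a).reverse = tildeComp n a := by
  rw [tildeA_eq ha hsa hk1 hkn]
  simp [List.reverse_append]

lemma tildeB_rev (hb : IsComposition b) (hsb : b.sum = n) :
    (tildeComp n b).reverse = tildeComp n b := by
  rw [tildeB_eq hb hsb]
  simp [List.reverse_append]

end TildeFacts

section MeanderFacts

variable {n k : ℕ} {a b : List ℕ}

lemma meanderC_adj {i j : Fin (2 * n)} :
    (meanderC n a b).Adj i j ↔ i ≠ j ∧
      (touch (tildeComp n a) 0 i.val j.val ∨ touch (tildeComp n b) 0 i.val j.val) := by
  unfold meanderC meanderA touch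
  show (i ≠ j ∧ _) ↔ _
  tauto

lemma notcrossB (hb : IsComposition b) (hsb : b.sum = n) {i j : ℕ}
    (h : touch (tildeComp n b) 0 i j) (hi : i < n) (hj : n ≤ j) : False := by
  rcases h with h | h
  · rw [tildeB_eq hb hsb, arcs_append] at h
    rcases h with h | h
    · have := arcs_bounds h; omega
    · have := arcs_bounds h; rw [hsb] at this; omega
  · have := arcs_bounds h; omega

lemma crossA (ha : IsComposition a) (hsa : a.sum = n - k) (hk1 : 1 ≤ k) (hkn : k ≤ n)
    {i j : ℕ} (h : touch (tildeComp n a) 0 i j) (hi : i < n) (hj : n ≤ j) :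
    ∃ t, t < k ∧ i = n - k + t ∧ j = n + k - 1 - t := by
  rcases h with h | h
  · rw [tildeA_eq ha hsa hk1 hkn, arcs_append, arcs_append] at h
    rcases h with (h | h) | h
    · have := arcs_bounds h; omega
    · rcases h with ⟨t, ht, hti, htj⟩ | h
      · rw [hsa] at hti htj
        exact ⟨t, by omega, by omega, by omega⟩
      · exact h.elim
    · have hba := arcs_bounds h
      simp only [List.sum_append, List.sum_cons, List.sum_nil, hsa] at hba
      omega
  · have := arcs_bounds h; omega

lemma centralA (ha : IsComposition a) (hsa : a.sum = n - k) (hk1 : 1 ≤ k) (hkn : k ≤ n)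
    {t : ℕ} (ht : t < k) :
    arcs (tildeComp n a) 0 (n - k + t) (n + k - 1 - t) := by
  rw [tildeA_eq ha hsa hk1 hkn, arcs_append, arcs_append]
  refine Or.inl (Or.inr (Or.inl ⟨t, by omega, ?_, ?_⟩)) <;> rw [hsa] <;> omega

lemma touch_refl_of_palindrome {c : List ℕ} (hrev : c.reverse = c) (hsum : c.sum = 2 * n)
    {i j : ℕ} (h : touch c 0 i j) (hi : i < 2 * n) (hj : j < 2 * n) :
    touch c 0 (2 * n - 1 - i) (2 * n - 1 - j) := by
  rcases h with h | h
  · have h2 := arcs_reverse h (S := 2 * n) (by rw [hsum]; omega)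
    rw [hrev, hsum, show 2 * n - 0 - (2 * n) = 0 by omega] at h2
    exact Or.inr h2
  · have h2 := arcs_reverse h (S := 2 * n) (by rw [hsum]; omega)
    rw [hrev, hsum, show 2 * n - 0 - (2 * n) = 0 by omega] at h2
    exact Or.inl h2

lemma sigma_invol {n : ℕ} (v : Fin (2 * n)) : sigmaRefl n (sigmaRefl n v) = v := by
  have := v.isLt
  apply Fin.ext
  show 2 * n - 1 - (2 * n - 1 - v.val) = v.val
  omega

lemma sigma_val {n : ℕ} (v : Fin (2 * n)) : (sigmaRefl n v).val = 2 * n - 1 - v.val := rfl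

section WithHyps

variable (ha : IsComposition a) (hb : IsComposition b)
  (hk1 : 1 ≤ k) (hkn : k ≤ n) (hsa : a.sum = n - k) (hsb : b.sum = n)

include ha hb hk1 hkn hsa hsb in
lemma sigma_adj {i j : Fin (2 * n)} (h : (meanderC n a b).Adj i j) :
    (meanderC n a b).Adj (sigmaRefl n i) (sigmaRefl n j) := by
  rw [meanderC_adj] at h ⊢
  obtain ⟨hne, h⟩ := h
  have hi := i.isLt
  have hj := j.isLt
  refine ⟨?_, ?_⟩
  · intro hcontra
    apply hne
    have := congrArg Fin.val hcontra
    simp only [sigma_val] at this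
    exact Fin.ext (by omega)
  · rcases h with h | h
    · exact Or.inl (touch_refl_of_palindrome (tildeA_rev ha hsa hk1 hkn)
        (tildeA_sum ha hsa hk1 hkn) h hi hj)
    · exact Or.inr (touch_refl_of_palindrome (tildeB_rev hb hsb)
        (tildeB_sum hb hsb) h hi hj)

include ha hb hk1 hkn hsa hsb in
lemma crossing_char {i j : Fin (2 * n)} (h : (meanderC n a b).Adj i j)
    (hi : i.val < n) (hj : n ≤ j.val) :
    j.val = 2 * n - 1 - i.val ∧ n - k ≤ i.val := by
  rw [meanderC_adj] at h
  rcases h.2 with ht | ht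
  · obtain ⟨t, htk, h1, h2⟩ := crossA ha hsa hk1 hkn ht hi hj
    omega
  · exact absurd ht (fun ht => notcrossB hb hsb ht hi hj)

include ha hk1 hkn hsa in
omit hb in
lemma central_adj {t : ℕ} (ht : t < k) :
    (meanderC n a b).Adj ⟨n - k + t, by omega⟩ ⟨n + k - 1 - t, by omega⟩ := by
  rw [meanderC_adj]
  constructor
  · intro hcontra
    have := congrArg Fin.val hcontra
    simp only at this
    omega
  · exact Or.inl (Or.inl (centralA ha hsa hk1 hkn ht))

set_option linter.unusedSectionVars false in
lemma deg_le_two (v : Fin (2 * n)) : ((meanderC n a b).neighborSet v).ncard ≤ 2 := by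
  by_contra hlt
  push_neg at hlt
  rw [Set.two_lt_ncard (Set.toFinite _)] at hlt
  obtain ⟨x, hx, y, hy, z, hz, hxy, hxz, hyz⟩ := hlt
  have tag : ∀ w : Fin (2 * n), (meanderC n a b).Adj v w →
      touch (tildeComp n a) 0 v.val w.val ∨ touch (tildeComp n b) 0 v.val w.val := by
    intro w hw
    exact (meanderC_adj.mp hw).2
  rcases tag x hx with t1 | t1 <;> rcases tag y hy with t2 | t2 <;> rcases tag z hz with t3 | t3
  all_goals first
    | exact hxy (Fin.ext (touch_functional t1 t2))
    | exact hxz (Fin.ext (touch_functional t1 t3))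
    | exact hyz (Fin.ext (touch_functional t2 t3))

end WithHyps

end MeanderFacts

section GenericGraph

variable {V : Type*} [Fintype V] [DecidableEq V]

/-- Parity: a finset closed under a fixed-point-free involution has even cardinality. -/
lemma even_card_of_invol (f : V → V) :
    ∀ (s : Finset V), (∀ x ∈ s, f x ∈ s) → (∀ x ∈ s, f (f x) = x) → (∀ x ∈ s, f x ≠ x) →
    Even s.card := by
  intro s
  induction s using Finset.strongInductionOn with
  | _ s ih =>
    intro hcl hinv hnf
    rcases Finset.eq_empty_or_nonempty s with rfl | ⟨x, hx⟩
    · simp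
    · have hfx : f x ∈ s := hcl x hx
      have hne : f x ≠ x := hnf x hx
      set s' := (s.erase x).erase (f x) with hs'
      have hxs' : ∀ y ∈ s', y ∈ s ∧ y ≠ x ∧ y ≠ f x := by
        intro y hy
        simp only [hs', Finset.mem_erase] at hy
        tauto
      have hcl' : ∀ y ∈ s', f y ∈ s' := by
        intro y hy
        obtain ⟨hys, hyx, hyfx⟩ := hxs' y hy
        simp only [hs', Finset.mem_erase]
        refine ⟨?_, ?_, hcl y hys⟩
        · intro h; exact hyx (by rw [← hinv y hys, h, hinv x hx])
        · intro h; exact hyfx (by rw [← hinv y hys, h])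
      have hinv' : ∀ y ∈ s', f (f y) = y := fun y hy => hinv y (hxs' y hy).1
      have hnf' : ∀ y ∈ s', f y ≠ y := fun y hy => hnf y (hxs' y hy).1
      have hmem2 : f x ∈ s.erase x := Finset.mem_erase.mpr ⟨hne, hfx⟩
      have hcard : s'.card = s.card - 2 := by
        rw [hs', Finset.card_erase_of_mem hmem2, Finset.card_erase_of_mem hx]
        omega
      have hN2 : 2 ≤ s.card := by
        have h2 := Finset.card_erase_of_mem hx
        have h3 := Finset.card_pos.mpr ⟨f x, hmem2⟩
        omega
      have hss : s' ⊂ s :=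
        lt_of_le_of_lt (Finset.erase_subset _ _) (Finset.erase_ssubset hx)
      have hev := ih s' hss hcl' hinv' hnf'
      rw [hcard] at hev
      obtain ⟨m, hm⟩ := hev
      exact ⟨m + 1, by omega⟩

variable (G : SimpleGraph V) [DecidableRel G.Adj] [DecidableEq G.ConnectedComponent]

/-- The vertex set of a connected component, as a finset. -/
def suppF (c : G.ConnectedComponent) : Finset V :=
  Finset.univ.filter (fun v => G.connectedComponentMk v = c)

/-- The subgraph of edges inside a given connected component, as a graph on `V`. -/
def compGraph (c : G.ConnectedComponent) : SimpleGraph V where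
  Adj x y := G.Adj x y ∧ G.connectedComponentMk x = c ∧ G.connectedComponentMk y = c
  symm := by constructor; intro x y ⟨h1, h2, h3⟩; exact ⟨h1.symm, h3, h2⟩
  loopless := by constructor; intro x ⟨h1, _⟩; exact G.loopless.irrefl x h1

instance (c : G.ConnectedComponent) : DecidableRel (compGraph G c).Adj := by
  intro x y
  unfold compGraph
  exact instDecidableAnd

/-- The edges of a connected component. -/
def compEdges (c : G.ConnectedComponent) : Finset (Sym2 V) :=
  (compGraph G c).edgeFinset

lemma mem_compEdges {c : G.ConnectedComponent} {x y : V} :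
    s(x, y) ∈ compEdges G c ↔
      G.Adj x y ∧ G.connectedComponentMk x = c ∧ G.connectedComponentMk y = c := by
  rw [compEdges, SimpleGraph.mem_edgeFinset, SimpleGraph.mem_edgeSet]
  rfl

lemma compGraph_degree_eq {c : G.ConnectedComponent} {v : V}
    (hv : G.connectedComponentMk v = c) : (compGraph G c).degree v = G.degree v := by
  unfold SimpleGraph.degree
  congr 1
  ext w
  simp only [SimpleGraph.mem_neighborFinset]
  show G.Adj v w ∧ _ ∧ _ ↔ _
  refine ⟨fun h => h.1, fun h => ⟨h, hv, ?_⟩⟩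
  rw [← hv]
  exact (SimpleGraph.ConnectedComponent.connectedComponentMk_eq_of_adj h).symm

lemma compGraph_degree_zero {c : G.ConnectedComponent} {v : V}
    (hv : G.connectedComponentMk v ≠ c) : (compGraph G c).degree v = 0 := by
  unfold SimpleGraph.degree
  rw [Finset.card_eq_zero]
  ext w
  simp only [SimpleGraph.mem_neighborFinset, Finset.notMem_empty, iff_false]
  intro h
  exact hv h.2.1

/-- Handshake within one component. -/
lemma comp_handshake (c : G.ConnectedComponent) :
    ∑ v ∈ suppF G c, G.degree v = 2 * (compEdges G c).card := by
  have h := SimpleGraph.sum_degrees_eq_twice_card_edges (compGraph G c)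
  rw [compEdges, ← h]
  rw [← Finset.sum_subset (Finset.subset_univ (suppF G c))]
  · apply Finset.sum_congr rfl
    intro v hv
    rw [compGraph_degree_eq G (Finset.mem_filter.mp hv).2]
  · intro v _ hv
    exact compGraph_degree_zero G (fun h => hv (Finset.mem_filter.mpr ⟨Finset.mem_univ _, h⟩))

/-- A component, being connected, has at least `|supp| - 1` edges. -/
lemma comp_conn_bound (c : G.ConnectedComponent) :
    (suppF G c).card ≤ (compEdges G c).card + 1 := by
  obtain ⟨r, hr⟩ := Quot.exists_rep c
  have hr' : G.connectedComponentMk r = c := hr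
  have key : ∀ v ∈ (suppF G c).erase r, ∃ u, G.Adj v u ∧
      G.connectedComponentMk u = c ∧ G.dist r u < G.dist r v := by
    intro v hv
    obtain ⟨hvr, hvs⟩ := Finset.mem_erase.mp hv
    have hvc : G.connectedComponentMk v = c := (Finset.mem_filter.mp hvs).2
    have hreach : G.Reachable r v :=
      SimpleGraph.ConnectedComponent.eq.mp (hr'.trans hvc.symm)
    have hdpos : 0 < G.dist r v := hreach.pos_dist_of_ne (fun h => hvr h.symm)
    obtain ⟨p, hp⟩ := hreach.exists_walk_length_eq_dist
    cases hq : p.reverse with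
    | nil =>
        exfalso
        have h0 : p.length = 0 := by
          have := congrArg SimpleGraph.Walk.length hq
          simpa using this
        omega
    | cons h q =>
        rename_i u
        refine ⟨u, h, ?_, ?_⟩
        · have : G.Reachable u r := ⟨q⟩
          exact (SimpleGraph.ConnectedComponent.eq.mpr this).trans hr'
        · have hlen := congrArg SimpleGraph.Walk.length hq
          rw [SimpleGraph.Walk.length_reverse, hp] at hlen
          simp only [SimpleGraph.Walk.length_cons] at hlen
          have : G.dist r u ≤ q.reverse.length := SimpleGraph.dist_le _
          rw [SimpleGraph.Walk.length_reverse] at this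
          omega
  choose u hu using key
  have hinj : ((suppF G c).erase r).card ≤ (compEdges G c).card := by
    classical
    refine Finset.card_le_card_of_injOn
      (fun v => if h : v ∈ (suppF G c).erase r then s(v, u v h) else s(v, v)) ?_ ?_
    · intro v hv
      show (if h : v ∈ (suppF G c).erase r then s(v, u v h) else s(v, v)) ∈ compEdges G c
      simp only [Finset.mem_coe] at hv
      rw [dif_pos hv]
      obtain ⟨h1, h2, _⟩ := hu v hv
      exact (mem_compEdges G).mpr ⟨h1, (Finset.mem_filter.mp (Finset.mem_erase.mp hv).2).2, h2⟩
    · intro v hv w hw heq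
      simp only [Finset.mem_coe] at hv hw
      dsimp only at heq
      rw [dif_pos hv, dif_pos hw, Sym2.eq_iff] at heq
      rcases heq with ⟨h1, _⟩ | ⟨h1, h2⟩
      · exact h1
      · exfalso
        have d1 := (hu v hv).2.2
        have d2 := (hu w hw).2.2
        rw [← h1] at d2
        rw [h2] at d1
        omega
  have hrmem : r ∈ suppF G c := Finset.mem_filter.mpr ⟨Finset.mem_univ _, hr'⟩
  have := Finset.card_erase_of_mem hrmem
  have := Finset.card_pos.mpr ⟨r, hrmem⟩
  omega

variable [Fintype G.ConnectedComponent]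

lemma sum_suppF_card : ∑ c : G.ConnectedComponent, (suppF G c).card = Fintype.card V := by
  rw [← Finset.card_univ]
  exact (Finset.card_eq_sum_card_fiberwise
    (f := G.connectedComponentMk) (fun x _ => Finset.mem_univ _)).symm

lemma out_fst_mem (e : Sym2 V) : e.out.1 ∈ e := by
  rcases hp : e.out with ⟨x, y⟩
  have h : s(x, y) = e := by have := Quot.out_eq e; rw [hp] at this; exact this
  rw [← h]
  exact Sym2.mem_mk_left x y

lemma sum_compEdges_card : ∑ c : G.ConnectedComponent, (compEdges G c).card
    = G.edgeFinset.card := by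
  classical
  have hfib : ∀ c : G.ConnectedComponent, compEdges G c =
      G.edgeFinset.filter (fun e => G.connectedComponentMk e.out.1 = c) := by
    intro c
    ext e
    induction e using Sym2.ind with
    | _ x y =>
      rw [mem_compEdges, Finset.mem_filter, SimpleGraph.mem_edgeFinset, SimpleGraph.mem_edgeSet]
      constructor
      · rintro ⟨hadj, hx, hy⟩
        refine ⟨hadj, ?_⟩
        rcases Sym2.mem_iff.mp (out_fst_mem s(x, y)) with h | h <;> rw [h] <;> assumption
      · rintro ⟨hadj, hout⟩
        have hxy : G.connectedComponentMk x = G.connectedComponentMk y :=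
          SimpleGraph.ConnectedComponent.connectedComponentMk_eq_of_adj hadj
        rcases Sym2.mem_iff.mp (out_fst_mem s(x, y)) with h | h <;> rw [h] at hout
        · exact ⟨hadj, hout, hxy ▸ hout⟩
        · exact ⟨hadj, hxy.symm ▸ hout, hout⟩
  calc ∑ c : G.ConnectedComponent, (compEdges G c).card
      = ∑ c : G.ConnectedComponent,
          (G.edgeFinset.filter (fun e => G.connectedComponentMk e.out.1 = c)).card := by
        apply Finset.sum_congr rfl; intro c _; rw [hfib]
    _ = G.edgeFinset.card :=
        (Finset.card_eq_sum_card_fiberwise (fun x _ => Finset.mem_univ _)).symm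

end GenericGraph

section Deletion

open SimpleGraph

variable {V : Type*} [Fintype V] [DecidableEq V]

lemma unique_sigma_fixed_edge (G : SimpleGraph V) [DecidableRel G.Adj]
    [DecidableEq G.ConnectedComponent]
    (σ' : V → V) (hinv : ∀ x, σ' (σ' x) = x)
    (haut : ∀ x y, G.Adj x y → G.Adj (σ' x) (σ' y))
    {v w : V} (hv : G.Adj v (σ' v)) (hw : G.Adj w (σ' w))
    (hcomp : G.connectedComponentMk w = G.connectedComponentMk v)
    (hcount : (compEdges G (G.connectedComponentMk v)).card
      < (suppF G (G.connectedComponentMk v)).card) :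
    w = v ∨ w = σ' v := by
  classical
  set c := G.connectedComponentMk v with hc
  set e0 : Sym2 V := s(v, σ' v) with he0
  set G' := G.deleteEdges {e0} with hG'
  have hG'adj : ∀ {x y : V}, G'.Adj x y ↔ G.Adj x y ∧ s(x, y) ≠ e0 := by
    intro x y
    rw [hG', SimpleGraph.deleteEdges_adj]
    simp
  have haut' : ∀ x y, G'.Adj x y → G'.Adj (σ' x) (σ' y) := by
    intro x y hxy
    rw [hG'adj] at hxy ⊢
    refine ⟨haut _ _ hxy.1, ?_⟩
    intro hcon
    apply hxy.2
    rw [he0] at hcon ⊢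
    rcases Sym2.eq_iff.mp hcon with ⟨h1, h2⟩ | ⟨h1, h2⟩
    · rw [Sym2.eq_iff]
      right
      constructor
      · rw [← hinv x, h1]
      · rw [← hinv y, h2, hinv]
    · rw [Sym2.eq_iff]
      left
      constructor
      · rw [← hinv x, h1, hinv]
      · rw [← hinv y, h2]
  have hreach' : ∀ {x y : V}, G'.Reachable x y → G'.Reachable (σ' x) (σ' y) := by
    intro x y hxy
    obtain ⟨p⟩ := hxy
    induction p with
    | nil => exact SimpleGraph.Reachable.refl _
    | cons h p ih => exact ((haut' _ _ h).reachable).trans ih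
  have hkey : ¬ G'.Reachable v (σ' v) := by
    intro hreach
    have step : ∀ {x y : V}, G.Adj x y → G'.Reachable v x → G'.Reachable v y := by
      intro x y hxy hrx
      by_cases he : s(x, y) = e0
      · rw [he0, Sym2.eq_iff] at he
        rcases he with ⟨rfl, rfl⟩ | ⟨h1, rfl⟩
        · exact hreach
        · exact SimpleGraph.Reachable.refl _
      · exact hrx.trans (SimpleGraph.Adj.reachable (hG'adj.mpr ⟨hxy, he⟩))
    have walkrec : ∀ {x u : V} (_ : G.Walk x u), G'.Reachable v x → G'.Reachable v u := by
      intro x u p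
      induction p with
      | nil => exact id
      | cons h p ih => exact fun hx => ih (step h hx)
    have R : ∀ u, G.Reachable v u → G'.Reachable v u := by
      intro u hu
      obtain ⟨p⟩ := hu
      exact walkrec p (SimpleGraph.Reachable.refl v)
    set c' := G'.connectedComponentMk v with hc'
    have hsupp_eq : suppF G' c' = suppF G c := by
      ext x
      simp only [suppF, Finset.mem_filter, Finset.mem_univ, true_and]
      rw [hc', hc, SimpleGraph.ConnectedComponent.eq, SimpleGraph.ConnectedComponent.eq]
      constructor
      · intro h
        exact h.mono (SimpleGraph.deleteEdges_le _)
      · intro h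
        exact (R x h.symm).symm
    have hedge_sub : compEdges G' c' ⊆ (compEdges G c).erase e0 := by
      intro e he
      induction e using Sym2.ind with
      | _ x y =>
        obtain ⟨hadj, hx, hy⟩ := (mem_compEdges G').mp he
        rw [hG'adj] at hadj
        rw [Finset.mem_erase]
        refine ⟨hadj.2, (mem_compEdges G).mpr ⟨hadj.1, ?_, ?_⟩⟩
        · have : x ∈ suppF G' c' := Finset.mem_filter.mpr ⟨Finset.mem_univ _, hx⟩
          rw [hsupp_eq] at this
          exact (Finset.mem_filter.mp this).2
        · have : y ∈ suppF G' c' := Finset.mem_filter.mpr ⟨Finset.mem_univ _, hy⟩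
          rw [hsupp_eq] at this
          exact (Finset.mem_filter.mp this).2
    have he0mem : e0 ∈ compEdges G c := by
      rw [he0]
      exact (mem_compEdges G).mpr ⟨hv, rfl,
        (SimpleGraph.ConnectedComponent.connectedComponentMk_eq_of_adj hv).symm⟩
    have hb1 := comp_conn_bound G' c'
    have hb2 := Finset.card_le_card hedge_sub
    have hb3 := Finset.card_erase_of_mem he0mem
    have hb4 := congrArg Finset.card hsupp_eq
    have hb5 := Finset.card_pos.mpr ⟨e0, he0mem⟩
    omega
  have hdisj : ∀ u, G'.Reachable v u → G'.Reachable v (σ' u) → False := by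
    intro u r1 r2
    have r1' : G'.Reachable (σ' v) (σ' u) := hreach' r1
    exact hkey (r2.trans r1'.symm)
  have hcover : ∀ u, G.Reachable v u → G'.Reachable v u ∨ G'.Reachable v (σ' u) := by
    intro u hu
    obtain ⟨p⟩ := hu
    have step : ∀ {x y : V}, G.Adj x y →
        (G'.Reachable v x ∨ G'.Reachable v (σ' x)) →
        (G'.Reachable v y ∨ G'.Reachable v (σ' y)) := by
      intro x y hxy hx
      by_cases he : s(x, y) = e0
      · rw [he0, Sym2.eq_iff] at he
        rcases he with ⟨rfl, rfl⟩ | ⟨h1, rfl⟩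
        · right
          rw [hinv]
          try exact SimpleGraph.Reachable.refl _
        · left
          exact SimpleGraph.Reachable.refl _
      · have hadj' : G'.Adj x y := hG'adj.mpr ⟨hxy, he⟩
        rcases hx with hx | hx
        · exact Or.inl (hx.trans hadj'.reachable)
        · exact Or.inr (hx.trans (haut' _ _ hadj').reachable)
    have walkrec : ∀ {x u : V} (_ : G.Walk x u),
        (G'.Reachable v x ∨ G'.Reachable v (σ' x)) →
        (G'.Reachable v u ∨ G'.Reachable v (σ' u)) := by
      intro x u p
      induction p with
      | nil => exact id
      | cons h p ih => exact fun hx => ih (step h hx)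
    exact walkrec p (Or.inl (SimpleGraph.Reachable.refl v))
  have hrvw : G.Reachable v w := (SimpleGraph.ConnectedComponent.eq.mp hcomp).symm
  by_cases he : s(w, σ' w) = e0
  · rw [he0, Sym2.eq_iff] at he
    rcases he with ⟨h1, _⟩ | ⟨h1, _⟩
    · exact Or.inl h1
    · exact Or.inr h1
  · exfalso
    have hadj' : G'.Adj w (σ' w) := hG'adj.mpr ⟨hw, he⟩
    rcases hcover w hrvw with r | r
    · exact hdisj w r (r.trans hadj'.reachable)
    · exact hdisj w (r.trans hadj'.symm.reachable) r

end Deletion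

set_option maxHeartbeats 1000000 in
/-- A Frobenius datum with `k` central arcs: the meander graph has exactly `k`
connected components, each a `σ`-stable segment containing exactly one central
arc, and the total number of arcs is `2n - k`. -/
theorem frobenius_k_components (n k : ℕ) (a b : List ℕ)
    (ha : IsComposition a) (hb : IsComposition b)
    (hk1 : 1 ≤ k) (hkn : k ≤ n)
    (hsa : a.sum = n - k) (hsb : b.sum = n)
    (hT : topIndex n a b = 0) :
    Nat.card (meanderC n a b).ConnectedComponent = k ∧
    (∀ c : (meanderC n a b).ConnectedComponent,
      IsSegmentComp (meanderC n a b) c ∧ SigmaStable n (meanderC n a b) c ∧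
      ∃! p : Fin (2 * n) × Fin (2 * n),
        (meanderC n a b).Adj p.1 p.2 ∧ p.1.val < n ∧ n ≤ p.2.val ∧
        (meanderC n a b).connectedComponentMk p.1 = c) ∧
    (meanderC n a b).edgeSet.ncard = 2 * n - k := by
  classical
  set G := meanderC n a b with hG
  haveI : DecidableRel G.Adj := Classical.decRel _
  haveI hfin : Finite G.ConnectedComponent :=
    Finite.of_surjective (G.connectedComponentMk) (fun c => Quot.exists_rep c)
  haveI : Fintype G.ConnectedComponent := Fintype.ofFinite _
  haveI : DecidableEq G.ConnectedComponent := Classical.decEq _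
  -- σ basics
  set σ : Fin (2 * n) → Fin (2 * n) := sigmaRefl n with hσ
  have hσinv : ∀ x, σ (σ x) = x := sigma_invol
  have hσadj : ∀ x y, G.Adj x y → G.Adj (σ x) (σ y) :=
    fun x y h => sigma_adj ha hb hk1 hkn hsa hsb h
  have hσne : ∀ x : Fin (2 * n), σ x ≠ x := by
    intro x hx
    have h1 := congrArg Fin.val hx
    rw [sigma_val] at h1
    have := x.isLt
    omega
  -- consequences of T = 0
  have hzero : numCycles G = 0 ∧ numNonStableSegments n a b = 0 := by
    unfold topIndex at hT
    have h1 : (0:ℚ) ≤ (numCycles (meanderC n a b) : ℚ) := Nat.cast_nonneg _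
    have h2 : (0:ℚ) ≤ (numNonStableSegments n a b : ℚ) := Nat.cast_nonneg _
    constructor <;> [skip; skip] <;>
      · rw [← Nat.cast_eq_zero (R := ℚ)]
        linarith
  have hseg : ∀ c : G.ConnectedComponent, IsSegmentComp G c := by
    intro c
    have h := hzero.1
    unfold numCycles at h
    rw [Set.ncard_eq_zero (Set.toFinite _)] at h
    intro hcyc
    have hmem : c ∈ {c' : G.ConnectedComponent | IsCycleComp G c'} := hcyc
    rw [h] at hmem
    exact hmem
  have hstab : ∀ c : G.ConnectedComponent, SigmaStable n G c := by
    intro c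
    by_contra hns
    have h := hzero.2
    unfold numNonStableSegments at h
    rw [Set.ncard_eq_zero (Set.toFinite _)] at h
    have : c ∈ {c : (meanderC n a b).ConnectedComponent |
        IsSegmentComp (meanderC n a b) c ∧ ¬ SigmaStable n (meanderC n a b) c} :=
      ⟨hseg c, hns⟩
    rw [h] at this
    exact this
  -- degrees
  have hdegncard : ∀ v, G.degree v = (G.neighborSet v).ncard := by
    intro v
    rw [← SimpleGraph.card_neighborSet_eq_degree, ← Nat.card_coe_set_eq,
      Nat.card_eq_fintype_card]
  have hdeg2 : ∀ v, G.degree v ≤ 2 := by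
    intro v
    rw [hdegncard]
    exact deg_le_two v
  have hsuppcl : ∀ (c : G.ConnectedComponent), ∀ x ∈ suppF G c, σ x ∈ suppF G c := by
    intro c x hx
    exact Finset.mem_filter.mpr ⟨Finset.mem_univ _, hstab c x (Finset.mem_filter.mp hx).2⟩
  -- |E_c| + 1 = |supp c|
  have hEc : ∀ c : G.ConnectedComponent, (compEdges G c).card + 1 = (suppF G c).card := by
    intro c
    have hhs := comp_handshake G c
    have hcb := comp_conn_bound G c
    obtain ⟨v0, hv0c, hv0ne⟩ : ∃ v, G.connectedComponentMk v = c ∧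
        (G.neighborSet v).ncard ≠ 2 := by
      have := hseg c
      unfold IsSegmentComp IsCycleComp at this
      push_neg at this
      exact this
    have hv0mem : v0 ∈ suppF G c := Finset.mem_filter.mpr ⟨Finset.mem_univ _, hv0c⟩
    have hv0deg : G.degree v0 ≤ 1 := by
      have := hdeg2 v0
      rw [hdegncard] at this ⊢
      omega
    have hsplit : G.degree v0 + ∑ v ∈ (suppF G c).erase v0, G.degree v
        = ∑ v ∈ suppF G c, G.degree v := Finset.add_sum_erase _ (fun v => G.degree v) hv0mem
    have hrest : ∑ v ∈ (suppF G c).erase v0, G.degree v ≤ ((suppF G c).erase v0).card * 2 := by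
      have h2 := Finset.sum_le_card_nsmul ((suppF G c).erase v0) (fun v => G.degree v) 2
        (fun x _ => hdeg2 x)
      simpa [smul_eq_mul] using h2
    have hce := Finset.card_erase_of_mem hv0mem
    have hpos := Finset.card_pos.mpr ⟨v0, hv0mem⟩
    omega
  -- existence of a σ-fixed edge in each component
  have hexist : ∀ c : G.ConnectedComponent, ∃ x : Fin (2 * n),
      G.Adj x (σ x) ∧ G.connectedComponentMk x = c ∧ x.val < n := by
    intro c
    -- parity of supp
    have hsupp_even : Even (suppF G c).card :=
      even_card_of_invol σ (suppF G c) (hsuppcl c) (fun x _ => hσinv x) (fun x _ => hσne x)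
    obtain ⟨r, hr⟩ := Quot.exists_rep c
    have hrmem : r ∈ suppF G c := Finset.mem_filter.mpr ⟨Finset.mem_univ _, hr⟩
    have hpos := Finset.card_pos.mpr ⟨r, hrmem⟩
    -- find a fixed edge by parity
    have hfix : ∃ e ∈ compEdges G c, Sym2.map σ e = e := by
      by_contra hno
      push_neg at hno
      have hclE : ∀ e ∈ compEdges G c, Sym2.map σ e ∈ compEdges G c := by
        intro e he
        induction e using Sym2.ind with
        | _ x y =>
          obtain ⟨hadj, hx, hy⟩ := (mem_compEdges G).mp he
          rw [Sym2.map_pair_eq]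
          exact (mem_compEdges G).mpr ⟨hσadj _ _ hadj, hstab c x hx, hstab c y hy⟩
      have hinvE : ∀ e ∈ compEdges G c, Sym2.map σ (Sym2.map σ e) = e := by
        intro e _
        induction e using Sym2.ind with
        | _ x y => rw [Sym2.map_pair_eq, Sym2.map_pair_eq, hσinv, hσinv]
      have hevE := even_card_of_invol (Sym2.map σ) (compEdges G c) hclE hinvE hno
      have h1 := hEc c
      obtain ⟨m1, hm1⟩ := hsupp_even
      obtain ⟨m2, hm2⟩ := hevE
      omega
    obtain ⟨e, heE, hefix⟩ := hfix
    induction e using Sym2.ind with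
    | _ x y =>
      obtain ⟨hadj, hx, hy⟩ := (mem_compEdges G).mp heE
      rw [Sym2.map_pair_eq, Sym2.eq_iff] at hefix
      have hyx : y = σ x := by
        rcases hefix with ⟨h1, h2⟩ | ⟨h1, h2⟩
        · exact absurd h1 (hσne x)
        · exact h1.symm
      subst hyx
      have hxval := x.isLt
      by_cases hxn : x.val < n
      · exact ⟨x, hadj, hx, hxn⟩
      · refine ⟨σ x, ?_, hy, ?_⟩
        · rw [hσinv]
          exact hadj.symm
        · rw [hσ, sigma_val]
          omega
  -- the unique crossing pair of a component
  have huniq : ∀ (c : G.ConnectedComponent) (x : Fin (2 * n)),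
      G.Adj x (σ x) → G.connectedComponentMk x = c → x.val < n →
      ∀ q : Fin (2 * n) × Fin (2 * n),
        (G.Adj q.1 q.2 ∧ q.1.val < n ∧ n ≤ q.2.val ∧ G.connectedComponentMk q.1 = c) →
        q = (x, σ x) := by
    intro c x hadj hxc hxn q hq
    obtain ⟨hqadj, hq1, hq2, hqc⟩ := hq
    have hq2x : q.2 = σ q.1 := by
      have := (crossing_char ha hb hk1 hkn hsa hsb hqadj hq1 hq2).1
      apply Fin.ext
      rw [hσ, sigma_val]
      exact this
    rw [hq2x] at hqadj
    have hcnt : (compEdges G (G.connectedComponentMk x)).card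
        < (suppF G (G.connectedComponentMk x)).card := by
      have := hEc (G.connectedComponentMk x)
      omega
    have := unique_sigma_fixed_edge G σ hσinv hσadj hadj hqadj (by rw [hqc, hxc]) hcnt
    rcases this with h1 | h1
    · rcases q with ⟨q1, q2⟩
      simp only at hq2x h1 ⊢
      rw [h1] at hq2x ⊢
      rw [hq2x]
    · exfalso
      have := congrArg Fin.val h1
      rw [hσ, sigma_val] at this
      have := x.isLt
      omega
  -- bullet 2
  have bullet2 : ∀ c : G.ConnectedComponent,
      IsSegmentComp G c ∧ SigmaStable n G c ∧
      ∃! p : Fin (2 * n) × Fin (2 * n),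
        G.Adj p.1 p.2 ∧ p.1.val < n ∧ n ≤ p.2.val ∧
        G.connectedComponentMk p.1 = c := by
    intro c
    refine ⟨hseg c, hstab c, ?_⟩
    obtain ⟨x, hadj, hxc, hxn⟩ := hexist c
    refine ⟨(x, σ x), ⟨hadj, hxn, ?_, hxc⟩, fun q hq => huniq c x hadj hxc hxn q hq⟩
    rw [hσ, sigma_val]
    have := x.isLt
    omega
  -- number of components
  have hncomp : Nat.card G.ConnectedComponent = k := by
    have hbij : Function.Bijective (fun t : Fin k =>
        G.connectedComponentMk ⟨n - k + t.val, by omega⟩) := by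
      constructor
      · intro t s hts
        have ht2 : t.val < k := t.isLt
        have hs2 : s.val < k := s.isLt
        have hp1 : n - k + t.val < 2 * n := by omega
        have hp2 : n - k + s.val < 2 * n := by omega
        have hr1 : n + k - 1 - t.val < 2 * n := by omega
        have hr2 : n + k - 1 - s.val < 2 * n := by omega
        set c := G.connectedComponentMk ⟨n - k + t.val, hp1⟩ with hcdef
        have hadjt := central_adj ha hk1 hkn hsa hsb ht2
        have hadjs := central_adj ha hk1 hkn hsa hsb hs2
        have hσt : σ ⟨n - k + t.val, hp1⟩ = (⟨n + k - 1 - t.val, hr1⟩ : Fin (2 * n)) := by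
          rw [hσ]
          apply Fin.ext
          show 2 * n - 1 - (n - k + t.val) = n + k - 1 - t.val
          omega
        have hσs : σ ⟨n - k + s.val, hp2⟩ = (⟨n + k - 1 - s.val, hr2⟩ : Fin (2 * n)) := by
          rw [hσ]
          apply Fin.ext
          show 2 * n - 1 - (n - k + s.val) = n + k - 1 - s.val
          omega
        have hadjt' : G.Adj ⟨n - k + t.val, hp1⟩ (σ ⟨n - k + t.val, hp1⟩) := by
          rw [hσt]
          exact hadjt
        have hadjs' : G.Adj ⟨n - k + s.val, hp2⟩ (σ ⟨n - k + s.val, hp2⟩) := by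
          rw [hσs]
          exact hadjs
        have hmks : G.connectedComponentMk ⟨n - k + s.val, hp2⟩ = c := hts.symm
        have hlt1 : (⟨n - k + t.val, hp1⟩ : Fin (2 * n)).val < n := by
          show n - k + t.val < n
          omega
        have hlt2 : (⟨n - k + s.val, hp2⟩ : Fin (2 * n)).val < n := by
          show n - k + s.val < n
          omega
        have hge2 : n ≤ (σ ⟨n - k + s.val, hp2⟩ : Fin (2 * n)).val := by
          rw [hσs]
          show n ≤ n + k - 1 - s.val
          omega
        have hq := huniq c _ hadjt' hcdef.symm hlt1
          (⟨n - k + s.val, hp2⟩, σ ⟨n - k + s.val, hp2⟩)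
          ⟨hadjs', hlt2, hge2, hmks⟩
        have hval : n - k + s.val = n - k + t.val :=
          congrArg (fun p : (Fin (2 * n)) × (Fin (2 * n)) => p.1.val) hq
        apply Fin.ext
        omega
      · intro c
        obtain ⟨x, hadj, hxc, hxn⟩ := hexist c
        have hcc := crossing_char ha hb hk1 hkn hsa hsb hadj hxn
          (by rw [hσ, sigma_val]; have := x.isLt; omega)
        have hnk : n - k ≤ x.val := hcc.2
        refine ⟨⟨x.val - (n - k), by omega⟩, ?_⟩
        show G.connectedComponentMk ⟨n - k + (x.val - (n - k)), by omega⟩ = c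
        rw [← hxc]
        congr 1
        apply Fin.ext
        simp
        omega
    have := Nat.card_eq_of_bijective _ hbij
    simpa using this.symm
  -- edge count
  have hedge : G.edgeSet.ncard = 2 * n - k := by
    have hsum1 := sum_suppF_card G
    have hsum2 := sum_compEdges_card G
    have hsum3 : ∑ c : G.ConnectedComponent, ((compEdges G c).card + 1)
        = ∑ c : G.ConnectedComponent, (suppF G c).card :=
      Finset.sum_congr rfl (fun c _ => hEc c)
    rw [Finset.sum_add_distrib, Finset.sum_const, smul_eq_mul, mul_one] at hsum3
    have hcardV : Fintype.card (Fin (2 * n)) = 2 * n := Fintype.card_fin _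
    have hcomps : (Finset.univ : Finset G.ConnectedComponent).card = k := by
      rw [Finset.card_univ, ← Nat.card_eq_fintype_card]
      exact hncomp
    have hEcard : G.edgeFinset.card = 2 * n - k := by
      omega
    rw [← hEcard, Set.ncard_eq_toFinset_card']
    try rfl
  exact ⟨hncomp, bullet2, hedge⟩
end

section
/- For n = 2k, the datum a = (2,2,...,2) (k twos) and b = (1,2,2,...,2) (a one followed by k−1 twos) is a Frobenius seaweed datum for sp_{2n} with exactly one central arc: the type-C meander graph Γ^C_n(a|b) is a single σ-stable segment (a path through all 2n vertices) with no cycles. -/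
lemma inBlockArc_two (o i j : ℕ) : inBlockArc o 2 i j ↔ i = o ∧ j = o + 1 := by
  constructor
  · rintro ⟨k, hk, rfl, rfl⟩; omega
  · rintro ⟨rfl, rfl⟩; exact ⟨0, by omega, by omega, by omega⟩

lemma not_inBlockArc_one (o i j : ℕ) : ¬ inBlockArc o 1 i j := by
  rintro ⟨k, hk, _, _⟩; omega

lemma arcs_rep2 (m o i j : ℕ) :
    arcs (List.replicate m 2) o i j ↔ ∃ t, t < m ∧ i = o + 2*t ∧ j = o + 2*t + 1 := by
  induction m generalizing o with
  | zero => simp [arcs]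
  | succ m ih =>
    rw [List.replicate_succ]
    simp only [arcs, inBlockArc_two, ih]
    constructor
    · rintro (⟨rfl, rfl⟩ | ⟨t, ht, rfl, rfl⟩)
      · exact ⟨0, by omega, by omega, by omega⟩
      · exact ⟨t+1, by omega, by omega, by omega⟩
    · rintro ⟨t, ht, rfl, rfl⟩
      cases t with
      | zero => left; omega
      | succ t => right; exact ⟨t, by omega, by omega, by omega⟩

lemma arcs_rep2_one (m o i j : ℕ) :
    arcs (List.replicate m 2 ++ [1]) o i j ↔ ∃ t, t < m ∧ i = o + 2*t ∧ j = o + 2*t + 1 := by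
  induction m generalizing o with
  | zero => simp [arcs, not_inBlockArc_one]
  | succ m ih =>
    rw [List.replicate_succ, List.cons_append]
    simp only [arcs, inBlockArc_two, ih]
    constructor
    · rintro (⟨rfl, rfl⟩ | ⟨t, ht, rfl, rfl⟩)
      · exact ⟨0, by omega, by omega, by omega⟩
      · exact ⟨t+1, by omega, by omega, by omega⟩
    · rintro ⟨t, ht, rfl, rfl⟩
      cases t with
      | zero => left; omega
      | succ t => right; exact ⟨t, by omega, by omega, by omega⟩

lemma filter_rep2 (m : ℕ) : (List.replicate m 2).filter (fun x => x != 0) = List.replicate m 2 := by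
  apply List.filter_eq_self.mpr
  intro x hx
  simp [List.eq_of_mem_replicate hx]

lemma tildeA (k : ℕ) :
    tildeComp (2*k) (List.replicate k 2) = List.replicate (2*k) 2 := by
  unfold tildeComp
  rw [List.filter_append, List.filter_append, filter_rep2, List.sum_replicate,
    List.reverse_replicate, filter_rep2]
  simp only [smul_eq_mul]
  have h0 : (2:ℕ) * (2*k - k * 2) = 0 := by omega
  rw [h0]
  simp [← List.replicate_add, two_mul]

lemma tildeB (k : ℕ) (hk : 1 ≤ k) :
    tildeComp (2*k) (1 :: List.replicate (k-1) 2)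
      = 1 :: (List.replicate (2*k-1) 2 ++ [1]) := by
  unfold tildeComp
  have hsum : (1 :: List.replicate (k-1) 2).sum = 2*k - 1 := by
    simp [List.sum_replicate]; omega
  rw [hsum]
  have h2 : 2 * (2*k - (2*k - 1)) = 2 := by omega
  rw [h2]
  rw [List.reverse_cons, List.reverse_replicate]
  have : (1 :: List.replicate (k - 1) 2 ++ [2] ++ (List.replicate (k - 1) 2 ++ [1]))
      = 1 :: (List.replicate (2*k-1) 2 ++ [1]) := by
    have hrep : List.replicate (k-1) 2 ++ 2 :: List.replicate (k-1) 2
        = List.replicate (2*k-1) 2 := by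
      rw [← List.replicate_succ, ← List.replicate_add]
      congr 1
      omega
    simp only [List.cons_append, List.append_assoc, List.singleton_append]
    rw [← hrep]
    simp
  rw [this]
  apply List.filter_eq_self.mpr
  intro x hx
  simp only [List.mem_cons, List.mem_append, List.mem_singleton, List.mem_replicate] at hx
  simp only [bne_iff_ne, ne_eq]
  rcases hx with h | ⟨-, h⟩ | h | h
  · omega
  · omega
  · omega
  · exact absurd h List.not_mem_nil


lemma arcs_B (m o i j : ℕ) :
    arcs (1 :: (List.replicate m 2 ++ [1])) o i j ↔
      ∃ t, t < m ∧ i = o + 1 + 2*t ∧ j = o + 1 + 2*t + 1 := by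
  show inBlockArc o 1 i j ∨ arcs (List.replicate m 2 ++ [1]) (o + 1) i j ↔ _
  rw [arcs_rep2_one]
  constructor
  · rintro (h | h)
    · exact absurd h (not_inBlockArc_one _ _ _)
    · exact h
  · exact Or.inr

lemma meanderA_adj (N : ℕ) (A B : List ℕ) (i j : Fin N) :
    (meanderA N A B).Adj i j ↔ (i ≠ j ∧ (arcs A 0 i.val j.val ∨ arcs A 0 j.val i.val ∨
      arcs B 0 i.val j.val ∨ arcs B 0 j.val i.val)) := Iff.rfl

/-- For `n = 2k`, the datum `a = (2^k)`, `b = (1, 2^{k-1})` is Frobenius with one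
central arc: its type-C meander graph is a single `σ`-stable segment, no cycles. -/
theorem explicit_frobenius_one_central_arc (k n : ℕ) (a b : List ℕ)
    (hk : 1 ≤ k) (hn : n = 2 * k)
    (ha : a = List.replicate k 2) (hb : b = 1 :: List.replicate (k - 1) 2) :
    topIndex n a b = 0 ∧ (meanderC n a b).Connected ∧
    numCycles (meanderC n a b) = 0 ∧
    ∀ c : (meanderC n a b).ConnectedComponent, SigmaStable n (meanderC n a b) c := by
  subst hb ha hn
  have hGA : meanderC (2*k) (List.replicate k 2) (1 :: List.replicate (k-1) 2)
      = meanderA (2*(2*k)) (List.replicate (2*k) 2)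
        (1 :: (List.replicate (2*k-1) 2 ++ [1])) := by
    unfold meanderC
    rw [tildeA, tildeB k hk]
  set G := meanderC (2*k) (List.replicate k 2) (1 :: List.replicate (k-1) 2) with hG
  have hadj : ∀ i j : Fin (2*(2*k)), G.Adj i j ↔ (i.val + 1 = j.val ∨ j.val + 1 = i.val) := by
    intro i j
    have hi := i.isLt
    have hj := j.isLt
    rw [hGA, meanderA_adj, arcs_rep2, arcs_rep2, arcs_B, arcs_B]
    constructor
    · rintro ⟨hne, (⟨t,ht,h1,h2⟩|⟨t,ht,h1,h2⟩|⟨t,ht,h1,h2⟩|⟨t,ht,h1,h2⟩)⟩ <;> omega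
    · intro h
      have hne : i ≠ j := by
        intro e
        rw [e] at h
        omega
      refine ⟨hne, ?_⟩
      rcases h with h | h
      · rcases Nat.even_or_odd i.val with ⟨t, ht⟩ | ⟨t, ht⟩
        · exact Or.inl ⟨t, by omega, by omega, by omega⟩
        · exact Or.inr (Or.inr (Or.inl ⟨t, by omega, by omega, by omega⟩))
      · rcases Nat.even_or_odd j.val with ⟨t, ht⟩ | ⟨t, ht⟩
        · exact Or.inr (Or.inl ⟨t, by omega, by omega, by omega⟩)
        · exact Or.inr (Or.inr (Or.inr ⟨t, by omega, by omega, by omega⟩))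
  have h0 : (0:ℕ) < 2*(2*k) := by omega
  have key : ∀ m (hm : m < 2*(2*k)), G.Reachable ⟨0, h0⟩ ⟨m, hm⟩ := by
    intro m
    induction m with
    | zero => intro hm; exact SimpleGraph.Reachable.refl _
    | succ m ih =>
      intro hm
      have h1 : m < 2*(2*k) := by omega
      exact (ih h1).trans ((hadj ⟨m,h1⟩ ⟨m+1,hm⟩).mpr (Or.inl rfl)).reachable
  have hreach : ∀ v : Fin (2*(2*k)), G.Reachable ⟨0,h0⟩ v := fun v => key v.val v.isLt
  have hconn : G.Connected := by
    rw [SimpleGraph.connected_iff]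
    exact ⟨fun u v => (hreach u).symm.trans (hreach v), ⟨⟨0,h0⟩⟩⟩
  have hcomp : ∀ v : Fin (2*(2*k)),
      G.connectedComponentMk v = G.connectedComponentMk ⟨0,h0⟩ :=
    fun v => SimpleGraph.ConnectedComponent.sound (hreach v).symm
  have hstab : ∀ c, SigmaStable (2*k) G c := by
    intro c v hv
    rw [hcomp (sigmaRefl (2*k) v), ← hcomp v, hv]
  have hnbr : (G.neighborSet ⟨0,h0⟩) = { (⟨1, by omega⟩ : Fin (2*(2*k))) } := by
    ext v
    simp only [SimpleGraph.mem_neighborSet, Set.mem_singleton_iff, hadj, Fin.ext_iff]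
    omega
  have hdeg : (G.neighborSet ⟨0,h0⟩).ncard = 1 := by
    rw [hnbr]
    exact Set.ncard_singleton _
  have hnocyc : ∀ c : G.ConnectedComponent, ¬ IsCycleComp G c := by
    intro c hc
    obtain ⟨v, rfl⟩ := c.exists_rep
    have h2 := hc ⟨0,h0⟩ ((hcomp v).symm.trans rfl)
    rw [hdeg] at h2
    omega
  have hcyc : numCycles G = 0 := by
    unfold numCycles
    have he : {c : G.ConnectedComponent | IsCycleComp G c} = ∅ :=
      Set.eq_empty_iff_forall_notMem.mpr hnocyc
    rw [he]
    exact Set.ncard_empty _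
  have hns : numNonStableSegments (2*k) (List.replicate k 2) (1 :: List.replicate (k-1) 2) = 0 := by
    unfold numNonStableSegments
    have he : {c : G.ConnectedComponent |
        IsSegmentComp G c ∧ ¬ SigmaStable (2*k) G c} = ∅ :=
      Set.eq_empty_iff_forall_notMem.mpr (fun c hc => hc.2 (hstab c))
    rw [← hG, he, Set.ncard_empty]
  refine ⟨?_, hconn, hcyc, hstab⟩
  unfold topIndex
  rw [← hG, hcyc, hns]
  norm_num
end
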